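/- Let U ⊆ (0,∞) × ℝ be open and let ε : U → ℝ be C² with ε_s(ρ,s) ≠ 0 on U. For (ρ,s) ∈ U and (a,b) ∈ ℝ², define the pullback of the quadratic form κ = d(T⁻¹)·dε − ρ⁻² d(pT⁻¹)·dρ to the state surface by q(a,b) = [a·∂_ρ(1/ε_s) + b·∂_s(1/ε_s)]·[a·ε_ρ + b·ε_s] − ρ⁻²·a·[a·∂_ρ(ρ²ε_ρ/ε_s) + b·∂_s(ρ²ε_ρ/ε_s)], where all functions are evaluated at (ρ,s). Then q(a,b) = −ε_s⁻¹·[ (ε_ρρ + 2ρ⁻¹ε_ρ)·a² + 2ε_ρs·a·b + ε_ss·b² ]. -/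

import Mathlib

/-- Partial derivative with respect to the first variable (the density `ρ`). -/
noncomputable def pderivR (f : ℝ → ℝ → ℝ) (r s : ℝ) : ℝ := deriv (fun x => f x s) r

/-- Partial derivative with respect to the second variable (the entropy `s`). -/
noncomputable def pderivS (f : ℝ → ℝ → ℝ) (r s : ℝ) : ℝ := deriv (fun y => f r y) s

/-- For a C² specific energy `ε(ρ,s)` with `ε_s ≠ 0` on an open set `U ⊆ (0,∞) × ℝ`,
the pullback of the form `κ = d(T⁻¹)·dε − ρ⁻² d(pT⁻¹)·dρ` to the state surface
(`T = ε_s`, `p = ρ²ε_ρ`) evaluated on `(a,b)` equals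
`−ε_s⁻¹ ((ε_ρρ + 2ρ⁻¹ε_ρ) a² + 2 ε_ρs a b + ε_ss b²)`. -/
theorem stmt_3 (U : Set (ℝ × ℝ)) (hU : IsOpen U)
    (hUsub : U ⊆ {q : ℝ × ℝ | 0 < q.1})
    (ε : ℝ → ℝ → ℝ) (hε : ContDiffOn ℝ 2 (Function.uncurry ε) U)
    (hεs : ∀ q ∈ U, pderivS ε q.1 q.2 ≠ 0)
    (r s : ℝ) (hq : (r, s) ∈ U) (a b : ℝ) :
    (a * pderivR (fun x y => (pderivS ε x y)⁻¹) r s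
        + b * pderivS (fun x y => (pderivS ε x y)⁻¹) r s)
      * (a * pderivR ε r s + b * pderivS ε r s)
    - (r ^ 2)⁻¹ * a *
        (a * pderivR (fun x y => x ^ 2 * pderivR ε x y / pderivS ε x y) r s
          + b * pderivS (fun x y => x ^ 2 * pderivR ε x y / pderivS ε x y) r s)
    = -(pderivS ε r s)⁻¹ *
        ((pderivR (pderivR ε) r s + 2 * r⁻¹ * pderivR ε r s) * a ^ 2
          + 2 * pderivS (pderivR ε) r s * (a * b)
          + pderivS (pderivS ε) r s * b ^ 2) := by
  classical
  set F := Function.uncurry ε with hF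
  have hrpos : (0:ℝ) < r := hUsub hq
  have hr : r ≠ 0 := ne_of_gt hrpos
  have hUnhds : U ∈ nhds (r, s) := hU.mem_nhds hq
  have hFat : ∀ p ∈ U, ContDiffAt ℝ 2 F p := fun p hp => hε.contDiffAt (hU.mem_nhds hp)
  have hdiff : ∀ p ∈ U, DifferentiableAt ℝ F p := fun p hp =>
    (hFat p hp).differentiableAt (by norm_num)
  have he2 : pderivS ε r s ≠ 0 := hεs (r, s) hq
  -- partial derivatives as fderiv
  have hpR : ∀ p ∈ U, pderivR ε p.1 p.2 = fderiv ℝ F p (1, 0) := by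
    intro p hp
    have h1 : HasDerivAt (fun x : ℝ => (x, p.2)) ((1:ℝ), (0:ℝ)) p.1 :=
      HasDerivAt.prodMk (hasDerivAt_id p.1) (hasDerivAt_const _ _)
    have h2 := (hdiff p hp).hasFDerivAt.comp_hasDerivAt p.1 h1
    have h3 : HasDerivAt (fun x => ε x p.2) (fderiv ℝ F p (1, 0)) p.1 := by
      exact h2
    exact h3.deriv
  have hpS : ∀ p ∈ U, pderivS ε p.1 p.2 = fderiv ℝ F p (0, 1) := by
    intro p hp
    have h1 : HasDerivAt (fun y : ℝ => (p.1, y)) ((0:ℝ), (1:ℝ)) p.2 :=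
      HasDerivAt.prodMk (hasDerivAt_const _ _) (hasDerivAt_id p.2)
    have h2 := (hdiff p hp).hasFDerivAt.comp_hasDerivAt p.2 h1
    have h3 : HasDerivAt (fun y => ε p.1 y) (fderiv ℝ F p (0, 1)) p.2 := by
      exact h2
    exact h3.deriv
  -- derivative of the fderiv map
  have hf' : ContDiffOn ℝ 1 (fun p => fderiv ℝ F p) U :=
    hε.fderiv_of_isOpen hU (by norm_num)
  have hGd : DifferentiableAt ℝ (fun p => fderiv ℝ F p) (r, s) :=
    (hf'.contDiffAt hUnhds).differentiableAt (by norm_num)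
  set D := fderiv ℝ (fun p => fderiv ℝ F p) (r, s) with hD
  have hGD : HasFDerivAt (fun p => fderiv ℝ F p) D (r, s) := hGd.hasFDerivAt
  have lineR : HasDerivAt (fun x : ℝ => (x, s)) ((1:ℝ), (0:ℝ)) r :=
    HasDerivAt.prodMk (hasDerivAt_id r) (hasDerivAt_const _ _)
  have lineS : HasDerivAt (fun y : ℝ => (r, y)) ((0:ℝ), (1:ℝ)) s :=
    HasDerivAt.prodMk (hasDerivAt_const _ _) (hasDerivAt_id s)
  have keyR : ∀ w : ℝ × ℝ, HasDerivAt (fun x => fderiv ℝ F (x, s) w) (D (1, 0) w) r := by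
    intro w
    have h := hGD.comp_hasDerivAt r lineR
    simpa using h.clm_apply (hasDerivAt_const r w)
  have keyS : ∀ w : ℝ × ℝ, HasDerivAt (fun y => fderiv ℝ F (r, y) w) (D (0, 1) w) s := by
    intro w
    have h := hGD.comp_hasDerivAt s lineS
    simpa using h.clm_apply (hasDerivAt_const s w)
  have hmemR : ∀ᶠ x in nhds r, (x, s) ∈ U := by
    have ho : IsOpen {x : ℝ | (x, s) ∈ U} := hU.preimage (continuous_id.prodMk continuous_const)
    exact ho.eventually_mem hq
  have hmemS : ∀ᶠ y in nhds s, (r, y) ∈ U := by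
    have ho : IsOpen {y : ℝ | (r, y) ∈ U} := hU.preimage (continuous_const.prodMk continuous_id)
    exact ho.eventually_mem hq
  -- second partials as HasDerivAt
  have HRR : HasDerivAt (fun x => pderivR ε x s) (D (1, 0) (1, 0)) r := by
    apply (keyR (1, 0)).congr_of_eventuallyEq
    filter_upwards [hmemR] with x hx
    exact hpR (x, s) hx
  have HRS : HasDerivAt (fun x => pderivS ε x s) (D (1, 0) (0, 1)) r := by
    apply (keyR (0, 1)).congr_of_eventuallyEq
    filter_upwards [hmemR] with x hx
    exact hpS (x, s) hx
  have HSR : HasDerivAt (fun y => pderivR ε r y) (D (0, 1) (1, 0)) s := by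
    apply (keyS (1, 0)).congr_of_eventuallyEq
    filter_upwards [hmemS] with y hy
    exact hpR (r, y) hy
  have HSS : HasDerivAt (fun y => pderivS ε r y) (D (0, 1) (0, 1)) s := by
    apply (keyS (0, 1)).congr_of_eventuallyEq
    filter_upwards [hmemS] with y hy
    exact hpS (r, y) hy
  -- Clairaut
  have hsymm : IsSymmSndFDerivAt ℝ F (r, s) := (hFat _ hq).isSymmSndFDerivAt (by simp)
  have hD12 : D (1, 0) (0, 1) = D (0, 1) (1, 0) := hsymm (1, 0) (0, 1)
  -- abbreviations
  set e1 := pderivR ε r s with he1d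
  set e2 := pderivS ε r s with he2d
  -- second partials identified
  have E11 : pderivR (pderivR ε) r s = D (1, 0) (1, 0) := HRR.deriv
  have E12 : pderivS (pderivR ε) r s = D (0, 1) (1, 0) := HSR.deriv
  have E22 : pderivS (pderivS ε) r s = D (0, 1) (0, 1) := HSS.deriv
  -- inverse derivatives
  have EinvR : pderivR (fun x y => (pderivS ε x y)⁻¹) r s
      = -(D (1, 0) (0, 1)) / e2 ^ 2 := (HRS.inv he2).deriv
  have EinvS : pderivS (fun x y => (pderivS ε x y)⁻¹) r s
      = -(D (0, 1) (0, 1)) / e2 ^ 2 := (HSS.inv he2).deriv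
  -- derivatives of x^2 ερ / εs
  have Hnum : HasDerivAt (fun x => x ^ 2 * pderivR ε x s)
      ((2 * r ^ 1) * pderivR ε r s + r ^ 2 * D (1, 0) (1, 0)) r :=
    (hasDerivAt_pow 2 r).mul HRR
  have EqR : pderivR (fun x y => x ^ 2 * pderivR ε x y / pderivS ε x y) r s
      = (((2 * r ^ 1) * e1 + r ^ 2 * D (1, 0) (1, 0)) * e2
          - r ^ 2 * e1 * D (1, 0) (0, 1)) / e2 ^ 2 := (Hnum.div HRS he2).deriv
  have Hnum2 : HasDerivAt (fun y => r ^ 2 * pderivR ε r y) (r ^ 2 * D (0, 1) (1, 0)) s :=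
    HSR.const_mul (r ^ 2)
  have EqS : pderivS (fun x y => x ^ 2 * pderivR ε x y / pderivS ε x y) r s
      = (r ^ 2 * D (0, 1) (1, 0) * e2 - r ^ 2 * e1 * D (0, 1) (0, 1)) / e2 ^ 2 :=
    (Hnum2.div HSS he2).deriv
  rw [EinvR, EinvS, EqR, EqS, E11, E12, E22, hD12]
  field_simp
  ring
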